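/- Let K be a field, m a natural number, and R a K-algebra which is a domain, graded by the additive group ℤ^m = (Fin m → ℤ): that is, 𝒜 : (Fin m → ℤ) → Submodule K R is a grading making R a graded algebra (GradedAlgebra 𝒜). If y ∈ R is a normal element, i.e. the sets {y * x : x ∈ R} and {x * y : x ∈ R} coincide, then for every n ∈ ℤ^m the sets {y * a : a ∈ 𝒜 n} and {a * y : a ∈ 𝒜 n} coincide. -/

import Mathlib

open DirectSum

section Aux

variable {ι K R : Type*} [AddCommGroup ι] [LinearOrder ι] [IsOrderedAddMonoid ι] [DecidableEq ι]
  [Field K] [Ring R] [IsDomain R] [Algebra K R]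
  (𝒜 : ι → Submodule K R) [GradedAlgebra 𝒜]

/-- Top-degree component of a product is the product of top-degree components. -/
lemma aux_mul_top_ne_zero (u v : R) {M p : ι}
    (hM : decompose 𝒜 u M ≠ 0) (hM' : ∀ i, decompose 𝒜 u i ≠ 0 → i ≤ M)
    (hp : decompose 𝒜 v p ≠ 0) (hp' : ∀ j, decompose 𝒜 v j ≠ 0 → j ≤ p) :
    decompose 𝒜 (u * v) (M + p) ≠ 0 := by
  classical
  have key : ((decompose 𝒜 u * decompose 𝒜 v) (M + p) : R)
      = (decompose 𝒜 u M : R) * (decompose 𝒜 v p : R) := by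
    rw [DirectSum.coe_mul_apply]
    have hset : (((decompose 𝒜 u).support ×ˢ (decompose 𝒜 v).support).filter
        (fun ij : ι × ι => ij.1 + ij.2 = M + p)) = {(M, p)} := by
      ext ⟨i, j⟩
      simp only [Finset.mem_filter, Finset.mem_product, DFinsupp.mem_support_iff,
        Finset.mem_singleton, Prod.mk.injEq]
      constructor
      · rintro ⟨⟨hi, hj⟩, hij⟩
        have h1 : i ≤ M := hM' i hi
        have h2 : j ≤ p := hp' j hj
        have hiM : i = M := le_antisymm h1 (by
          have : M + p ≤ i + p := by
            calc M + p = i + j := hij.symm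
            _ ≤ i + p := add_le_add_right h2 i
          exact le_of_add_le_add_right this)
        exact ⟨hiM, by rw [hiM] at hij; exact add_left_cancel hij⟩
      · rintro ⟨rfl, rfl⟩
        exact ⟨⟨hM, hp⟩, rfl⟩
    rw [hset, Finset.sum_singleton]
  intro h
  rw [← DirectSum.decompose_mul] at key
  rw [h] at key
  have : (decompose 𝒜 u M : R) * (decompose 𝒜 v p : R) ≠ 0 :=
    mul_ne_zero (fun h' => hM (Subtype.ext h')) (fun h' => hp (Subtype.ext h'))
  exact this (by simpa using key.symm)

/-- Bottom-degree component of a product is the product of bottom-degree components. -/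
lemma aux_mul_bot_ne_zero (u v : R) {M p : ι}
    (hM : decompose 𝒜 u M ≠ 0) (hM' : ∀ i, decompose 𝒜 u i ≠ 0 → M ≤ i)
    (hp : decompose 𝒜 v p ≠ 0) (hp' : ∀ j, decompose 𝒜 v j ≠ 0 → p ≤ j) :
    decompose 𝒜 (u * v) (M + p) ≠ 0 := by
  classical
  have key : ((decompose 𝒜 u * decompose 𝒜 v) (M + p) : R)
      = (decompose 𝒜 u M : R) * (decompose 𝒜 v p : R) := by
    rw [DirectSum.coe_mul_apply]
    have hset : (((decompose 𝒜 u).support ×ˢ (decompose 𝒜 v).support).filter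
        (fun ij : ι × ι => ij.1 + ij.2 = M + p)) = {(M, p)} := by
      ext ⟨i, j⟩
      simp only [Finset.mem_filter, Finset.mem_product, DFinsupp.mem_support_iff,
        Finset.mem_singleton, Prod.mk.injEq]
      constructor
      · rintro ⟨⟨hi, hj⟩, hij⟩
        have h1 : M ≤ i := hM' i hi
        have h2 : p ≤ j := hp' j hj
        have hiM : i = M := le_antisymm (by
          have : i + p ≤ M + p := by
            calc i + p ≤ i + j := add_le_add_right h2 i
            _ = M + p := hij
          exact le_of_add_le_add_right this) h1
        exact ⟨hiM, by rw [hiM] at hij; exact add_left_cancel hij⟩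
      · rintro ⟨rfl, rfl⟩
        exact ⟨⟨hM, hp⟩, rfl⟩
    rw [hset, Finset.sum_singleton]
  intro h
  rw [← DirectSum.decompose_mul] at key
  rw [h] at key
  have : (decompose 𝒜 u M : R) * (decompose 𝒜 v p : R) ≠ 0 :=
    mul_ne_zero (fun h' => hM (Subtype.ext h')) (fun h' => hp (Subtype.ext h'))
  exact this (by simpa using key.symm)

/-- If `b * y = y * a` with `a` homogeneous of degree `n` and `y ≠ 0`, then `b ∈ 𝒜 n`. -/
lemma aux_right_mem {y a b : R} {n : ι} (hy : y ≠ 0) (ha : a ∈ 𝒜 n)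
    (h : b * y = y * a) : b ∈ 𝒜 n := by
  classical
  by_cases hb : b = 0
  · rw [hb]; exact Submodule.zero_mem _
  -- supports are nonempty
  have hbs : (decompose 𝒜 b).support.Nonempty := by
    rw [Finset.nonempty_iff_ne_empty, Ne, DFinsupp.support_eq_empty]
    exact fun h0 => hb (by simpa using congrArg (decompose 𝒜).symm h0)
  have hys : (decompose 𝒜 y).support.Nonempty := by
    rw [Finset.nonempty_iff_ne_empty, Ne, DFinsupp.support_eq_empty]
    exact fun h0 => hy (by simpa using congrArg (decompose 𝒜).symm h0)
  set M := (decompose 𝒜 b).support.max' hbs with hMdef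
  set μ := (decompose 𝒜 b).support.min' hbs with hμdef
  set p := (decompose 𝒜 y).support.max' hys with hpdef
  set q := (decompose 𝒜 y).support.min' hys with hqdef
  -- every nonzero component of y * a has degree i + n with y_i ≠ 0
  have hya : ∀ k : ι, decompose 𝒜 (y * a) k ≠ 0 → decompose 𝒜 y (k - n) ≠ 0 := by
    intro k hk
    have : (decompose 𝒜 (y * a) ((k - n) + n) : R) = (decompose 𝒜 y (k - n) : R) * a :=
      DirectSum.coe_decompose_mul_add_of_right_mem 𝒜 ha
    rw [sub_add_cancel] at this
    intro h0
    apply hk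
    ext
    rw [this, h0]
    simp
  -- top degree
  have htop : decompose 𝒜 (b * y) (M + p) ≠ 0 := by
    refine aux_mul_top_ne_zero 𝒜 b y ?_ ?_ ?_ ?_
    · exact DFinsupp.mem_support_iff.mp ((decompose 𝒜 b).support.max'_mem hbs)
    · exact fun i hi => Finset.le_max' _ i (DFinsupp.mem_support_iff.mpr hi)
    · exact DFinsupp.mem_support_iff.mp ((decompose 𝒜 y).support.max'_mem hys)
    · exact fun j hj => Finset.le_max' _ j (DFinsupp.mem_support_iff.mpr hj)
  have hbot : decompose 𝒜 (b * y) (μ + q) ≠ 0 := by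
    refine aux_mul_bot_ne_zero 𝒜 b y ?_ ?_ ?_ ?_
    · exact DFinsupp.mem_support_iff.mp ((decompose 𝒜 b).support.min'_mem hbs)
    · exact fun i hi => Finset.min'_le _ i (DFinsupp.mem_support_iff.mpr hi)
    · exact DFinsupp.mem_support_iff.mp ((decompose 𝒜 y).support.min'_mem hys)
    · exact fun j hj => Finset.min'_le _ j (DFinsupp.mem_support_iff.mpr hj)
  rw [h] at htop hbot
  -- conclude M ≤ n and n ≤ μ
  have hMn : M ≤ n := by
    have h1 : decompose 𝒜 y (M + p - n) ≠ 0 := hya _ htop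
    have h2 : M + p - n ≤ p := Finset.le_max' _ _ (DFinsupp.mem_support_iff.mpr h1)
    have := sub_le_iff_le_add.mp h2
    -- M + p ≤ p + n
    have : M + p ≤ n + p := by
      calc M + p = M + p - n + n := by abel
      _ ≤ p + n := add_le_add_left h2 n
      _ = n + p := add_comm p n
    exact le_of_add_le_add_right this
  have hnμ : n ≤ μ := by
    have h1 : decompose 𝒜 y (μ + q - n) ≠ 0 := hya _ hbot
    have h2 : q ≤ μ + q - n := Finset.min'_le _ _ (DFinsupp.mem_support_iff.mpr h1)
    have : n + q ≤ μ + q := by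
      calc n + q ≤ n + (μ + q - n) := add_le_add_right h2 n
      _ = μ + q := by abel
    exact le_of_add_le_add_right this
  -- all degrees in support of b equal n
  have hsupp : ∀ k ∈ (decompose 𝒜 b).support, k = n := by
    intro k hk
    have h1 : k ≤ M := Finset.le_max' _ k hk
    have h2 : μ ≤ k := Finset.min'_le _ k hk
    exact le_antisymm (h1.trans hMn) (hnμ.trans h2)
  have := DirectSum.sum_support_decompose 𝒜 b
  rw [← this]
  exact Submodule.sum_mem _ fun k hk => by
    rw [hsupp k hk] at *
    exact SetLike.coe_mem _

/-- If `y * c = a * y` with `a` homogeneous of degree `n` and `y ≠ 0`, then `c ∈ 𝒜 n`. -/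
lemma aux_left_mem {y a c : R} {n : ι} (hy : y ≠ 0) (ha : a ∈ 𝒜 n)
    (h : y * c = a * y) : c ∈ 𝒜 n := by
  classical
  by_cases hc : c = 0
  · rw [hc]; exact Submodule.zero_mem _
  have hcs : (decompose 𝒜 c).support.Nonempty := by
    rw [Finset.nonempty_iff_ne_empty, Ne, DFinsupp.support_eq_empty]
    exact fun h0 => hc (by simpa using congrArg (decompose 𝒜).symm h0)
  have hys : (decompose 𝒜 y).support.Nonempty := by
    rw [Finset.nonempty_iff_ne_empty, Ne, DFinsupp.support_eq_empty]
    exact fun h0 => hy (by simpa using congrArg (decompose 𝒜).symm h0)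
  set M := (decompose 𝒜 c).support.max' hcs with hMdef
  set μ := (decompose 𝒜 c).support.min' hcs with hμdef
  set p := (decompose 𝒜 y).support.max' hys with hpdef
  set q := (decompose 𝒜 y).support.min' hys with hqdef
  have hay : ∀ k : ι, decompose 𝒜 (a * y) k ≠ 0 → decompose 𝒜 y (k - n) ≠ 0 := by
    intro k hk
    have : (decompose 𝒜 (a * y) (n + (k - n)) : R) = a * (decompose 𝒜 y (k - n) : R) :=
      DirectSum.coe_decompose_mul_add_of_left_mem 𝒜 ha
    rw [add_sub_cancel] at this
    intro h0
    apply hk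
    ext
    rw [this, h0]
    simp
  have htop : decompose 𝒜 (y * c) (p + M) ≠ 0 := by
    refine aux_mul_top_ne_zero 𝒜 y c ?_ ?_ ?_ ?_
    · exact DFinsupp.mem_support_iff.mp ((decompose 𝒜 y).support.max'_mem hys)
    · exact fun i hi => Finset.le_max' _ i (DFinsupp.mem_support_iff.mpr hi)
    · exact DFinsupp.mem_support_iff.mp ((decompose 𝒜 c).support.max'_mem hcs)
    · exact fun j hj => Finset.le_max' _ j (DFinsupp.mem_support_iff.mpr hj)
  have hbot : decompose 𝒜 (y * c) (q + μ) ≠ 0 := by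
    refine aux_mul_bot_ne_zero 𝒜 y c ?_ ?_ ?_ ?_
    · exact DFinsupp.mem_support_iff.mp ((decompose 𝒜 y).support.min'_mem hys)
    · exact fun i hi => Finset.min'_le _ i (DFinsupp.mem_support_iff.mpr hi)
    · exact DFinsupp.mem_support_iff.mp ((decompose 𝒜 c).support.min'_mem hcs)
    · exact fun j hj => Finset.min'_le _ j (DFinsupp.mem_support_iff.mpr hj)
  rw [h] at htop hbot
  have hMn : M ≤ n := by
    have h1 : decompose 𝒜 y (p + M - n) ≠ 0 := hay _ htop
    have h2 : p + M - n ≤ p := Finset.le_max' _ _ (DFinsupp.mem_support_iff.mpr h1)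
    have : M + p ≤ n + p := by
      calc M + p = (p + M - n) + n := by abel
      _ ≤ p + n := add_le_add_left h2 n
      _ = n + p := add_comm p n
    exact le_of_add_le_add_right this
  have hnμ : n ≤ μ := by
    have h1 : decompose 𝒜 y (q + μ - n) ≠ 0 := hay _ hbot
    have h2 : q ≤ q + μ - n := Finset.min'_le _ _ (DFinsupp.mem_support_iff.mpr h1)
    have : n + q ≤ μ + q := by
      calc n + q ≤ n + (q + μ - n) := add_le_add_right h2 n
      _ = μ + q := by abel
    exact le_of_add_le_add_right this
  have hsupp : ∀ k ∈ (decompose 𝒜 c).support, k = n := by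
    intro k hk
    have h1 : k ≤ M := Finset.le_max' _ k hk
    have h2 : μ ≤ k := Finset.min'_le _ k hk
    exact le_antisymm (h1.trans hMn) (hnμ.trans h2)
  have := DirectSum.sum_support_decompose 𝒜 c
  rw [← this]
  exact Submodule.sum_mem _ fun k hk => by
    rw [hsupp k hk] at *
    exact SetLike.coe_mem _

end Aux

/-- In a `ℤ^m`-graded `K`-algebra `R` which is a domain, a normal element `y` (i.e.
`y R = R y`) satisfies `y · 𝒜 n = 𝒜 n · y` for every homogeneous component `𝒜 n`. -/
theorem normal_element_graded_components {K R : Type*} [Field K] [Ring R] [IsDomain R]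
    [Algebra K R] (m : ℕ) (𝒜 : (Fin m → ℤ) → Submodule K R) [GradedAlgebra 𝒜]
    (y : R)
    (hy : {z : R | ∃ x : R, z = y * x} = {z : R | ∃ x : R, z = x * y}) :
    ∀ n : Fin m → ℤ,
      {z : R | ∃ a ∈ 𝒜 n, z = y * a} = {z : R | ∃ a ∈ 𝒜 n, z = a * y} := by
  intro n
  by_cases hy0 : y = 0
  · subst hy0
    ext z
    constructor
    · rintro ⟨a, _, rfl⟩; exact ⟨0, Submodule.zero_mem _, by simp⟩
    · rintro ⟨a, _, rfl⟩; exact ⟨0, Submodule.zero_mem _, by simp⟩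
  -- transfer the grading to the lexicographically ordered index type
  letI : LinearOrder (Lex (Fin m → ℤ)) :=
    @Pi.Lex.linearOrder _ _ _ (inferInstanceAs (WellFoundedLT (Fin m))) _
  set 𝒜' : Lex (Fin m → ℤ) → Submodule K R := fun k => 𝒜 (ofLex k) with h𝒜'
  haveI : GradedAlgebra 𝒜' := ‹GradedAlgebra 𝒜›
  ext z
  simp only [Set.mem_setOf_eq]
  constructor
  · rintro ⟨a, han, rfl⟩
    have : y * a ∈ {z : R | ∃ x : R, z = y * x} := ⟨a, rfl⟩
    rw [hy] at this
    obtain ⟨b, hb⟩ := this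
    refine ⟨b, ?_, hb⟩
    exact aux_right_mem 𝒜' (n := toLex n) hy0 han hb.symm
  · rintro ⟨a, han, rfl⟩
    have : a * y ∈ {z : R | ∃ x : R, z = x * y} := ⟨a, rfl⟩
    rw [← hy] at this
    obtain ⟨c, hc⟩ := this
    refine ⟨c, ?_, hc⟩
    exact aux_left_mem 𝒜' (n := toLex n) hy0 han hc.symm
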